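/- For m, n positive integers with m ≠ n and β, L > 0, the double cosine family {cos(mπx/L)·cos(nπy/L)}_{m,n≥0} on [0,L]² satisfies: the function W(x,y) = Σ_{m,n≥0} a_{m,n} cos(mπx/L) cos(nπy/L) with a_{m,n} = −32βL²(cos((m+n)π) − 1)/((n²−m²)π²((m²+n²)π² + 4βL²)) for m,n>0, m≠n, a_{m,0} = −16βL²(1−cos(mπ))/(m²π²(m²π² + 4βL²)), a_{0,n} = −a_{n,0}, a_{m,m}=0, gives the Fourier coefficients of the solution of (∂ₓ²+∂_y² −4β)W = 4β·sign(y−x) on [0,L]² with Neumann boundary conditions; equivalently, for each (m,n), −((m²+n²)π²/L² + 4β)·a_{m,n} equals the Fourier coefficient of 4β·sign(y−x) with respect to the normalized Neumann eigenfunction cos(mπx/L)cos(nπy/L). -/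

import Mathlib

open Real Set MeasureTheory intervalIntegral

lemma measurable_rsign : Measurable Real.sign := by
  have : Real.sign = fun r : ℝ => if r < 0 then (-1:ℝ) else if 0 < r then 1 else 0 := by
    funext r; rfl
  rw [this]
  exact Measurable.ite (measurableSet_lt measurable_id measurable_const)
    measurable_const (Measurable.ite (measurableSet_lt measurable_const measurable_id)
      measurable_const measurable_const)

lemma abs_rsign_le (r : ℝ) : |Real.sign r| ≤ 1 := by
  rcases Real.sign_apply_eq r with h | h | h <;> rw [h] <;> norm_num

lemma hasDerivAt_sin_c (c x : ℝ) (hc : c ≠ 0) :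
    HasDerivAt (fun u => Real.sin (c * u) / c) (Real.cos (c * x)) x := by
  have h1 : HasDerivAt (fun u : ℝ => c * u) c x := by
    simpa using (hasDerivAt_id x).const_mul c
  have h3 := ((Real.hasDerivAt_sin (c * x)).comp x h1).div_const c
  simpa [mul_div_assoc, mul_div_cancel_right₀ _ hc] using h3

lemma hasDerivAt_cos_c (c x : ℝ) (hc : c ≠ 0) :
    HasDerivAt (fun u => -Real.cos (c * u) / c) (Real.sin (c * x)) x := by
  have h1 : HasDerivAt (fun u : ℝ => c * u) c x := by
    simpa using (hasDerivAt_id x).const_mul c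
  have h2 := ((Real.hasDerivAt_cos (c * x)).comp x h1).neg.div_const c
  simpa [mul_div_assoc, mul_div_cancel_right₀ _ hc] using h2

lemma hasDerivAt_xsin (c x : ℝ) (hc : c ≠ 0) :
    HasDerivAt (fun u => u * Real.sin (c * u) / c + Real.cos (c * u) / c ^ 2)
      (x * Real.cos (c * x)) x := by
  have h1 : HasDerivAt (fun u : ℝ => c * u) c x := by
    simpa using (hasDerivAt_id x).const_mul c
  have hsin : HasDerivAt (fun u : ℝ => Real.sin (c * u)) (Real.cos (c * x) * c) x :=
    (Real.hasDerivAt_sin (c * x)).comp x h1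
  have hx : HasDerivAt (fun u : ℝ => u) 1 x := hasDerivAt_id x
  have hprod := (hx.mul hsin).div_const c
  have hcos := (((Real.hasDerivAt_cos (c * x)).comp x h1)).div_const (c ^ 2)
  have h := hprod.add hcos
  have : (1 * Real.sin (c * x) + x * (Real.cos (c * x) * c)) / c +
      -Real.sin (c * x) * c / c ^ 2 = x * Real.cos (c * x) := by
    field_simp; ring
  rw [this] at h
  exact h

lemma int_cos_c (c a b : ℝ) (hc : c ≠ 0) :
    ∫ x in a..b, Real.cos (c * x) = (Real.sin (c * b) - Real.sin (c * a)) / c := by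
  rw [integral_eq_sub_of_hasDerivAt (fun x _ => hasDerivAt_sin_c c x hc)
    ((Real.continuous_cos.comp (continuous_const.mul continuous_id)).intervalIntegrable a b)]
  ring

lemma sign_integrable (x c a b : ℝ) :
    IntervalIntegrable (fun y => Real.sign (y - x) * Real.cos (c * y)) volume a b := by
  rw [intervalIntegrable_iff]
  haveI : IsFiniteMeasure (volume.restrict (Set.uIoc a b)) :=
    ⟨by rw [Measure.restrict_apply_univ]; exact measure_Ioc_lt_top⟩
  apply (integrable_const (1:ℝ)).mono'
  · exact ((measurable_rsign.comp (measurable_id.sub_const x)).mul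
      (Real.measurable_cos.comp (measurable_const.mul measurable_id))).aestronglyMeasurable
  · refine ae_of_all _ fun y => ?_
    rw [Real.norm_eq_abs, abs_mul]
    calc |Real.sign (y - x)| * |Real.cos (c * y)| ≤ 1 * 1 :=
      mul_le_mul (abs_rsign_le _) (Real.abs_cos_le_one _) (abs_nonneg _) zero_le_one
    _ = 1 := by norm_num

lemma inner_sign (x L c : ℝ) (hx0 : 0 ≤ x) (hxL : x ≤ L) :
    ∫ y in (0:ℝ)..L, Real.sign (y - x) * Real.cos (c * y)
      = (∫ y in x..L, Real.cos (c * y)) - ∫ y in (0:ℝ)..x, Real.cos (c * y) := by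
  rw [← integral_add_adjacent_intervals (sign_integrable x c 0 x) (sign_integrable x c x L)]
  have h1 : (∫ y in (0:ℝ)..x, Real.sign (y - x) * Real.cos (c * y))
      = ∫ y in (0:ℝ)..x, -Real.cos (c * y) := by
    apply intervalIntegral.integral_congr_ae
    have hae : ∀ᵐ y : ℝ, y ≠ x := ae_iff.mpr (by simp)
    filter_upwards [hae] with y hy hmem
    rw [uIoc_of_le hx0] at hmem
    have : y - x < 0 := sub_neg.mpr (lt_of_le_of_ne hmem.2 hy)
    rw [Real.sign_of_neg this]; ring
  have h2 : (∫ y in x..L, Real.sign (y - x) * Real.cos (c * y))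
      = ∫ y in x..L, Real.cos (c * y) := by
    apply intervalIntegral.integral_congr_ae
    refine ae_of_all _ fun y hmem => ?_
    rw [uIoc_of_le hxL] at hmem
    rw [Real.sign_of_pos (sub_pos.mpr hmem.1)]; ring
  rw [h1, h2, intervalIntegral.integral_neg]; ring

/-- closed form of the inner integral -/
lemma inner_eval (β L : ℝ) (hL : 0 < L) (m n : ℕ) (x : ℝ) (hx0 : 0 ≤ x) (hxL : x ≤ L) :
    (∫ y in (0:ℝ)..L, (4*β*Real.sign (y - x)) * Real.cos (m*π*x/L) * Real.cos (n*π*y/L))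
      = 4*β*Real.cos ((m*π/L)*x) *
        (if n = 0 then L - 2*x else (-2*L/(n*π)) * Real.sin ((n*π/L)*x)) := by
  have harg : ∀ y : ℝ, (n:ℝ)*π*y/L = ((n:ℝ)*π/L)*y := fun y => by ring
  have hargx : (m:ℝ)*π*x/L = ((m:ℝ)*π/L)*x := by ring
  have hfun : (fun y => (4*β*Real.sign (y - x)) * Real.cos ((m:ℝ)*π*x/L) * Real.cos ((n:ℝ)*π*y/L))
      = fun y => (4*β*Real.cos (((m:ℝ)*π/L)*x)) * (Real.sign (y - x) * Real.cos (((n:ℝ)*π/L)*y)) := by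
    funext y; rw [harg y, hargx]; ring
  rw [hfun, intervalIntegral.integral_const_mul, inner_sign x L _ hx0 hxL]
  rcases eq_or_ne n 0 with hn | hn
  · subst hn
    rw [if_pos rfl]
    simp only [Nat.cast_zero, zero_mul, zero_div, Real.cos_zero]
    rw [intervalIntegral.integral_const, intervalIntegral.integral_const]
    simp only [smul_eq_mul, mul_one]
    ring
  · have hnR : (n:ℝ) ≠ 0 := Nat.cast_ne_zero.mpr hn
    have hc : (n:ℝ)*π/L ≠ 0 :=
      div_ne_zero (mul_ne_zero hnR Real.pi_ne_zero) hL.ne'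
    rw [if_neg hn, int_cos_c _ _ _ hc, int_cos_c _ _ _ hc]
    have hL' : ((n:ℝ)*π/L)*L = (n:ℝ)*π := by field_simp
    rw [hL', Real.sin_nat_mul_pi, mul_zero, Real.sin_zero]
    field_simp
    ring

lemma int_sin_c (c a b : ℝ) (hc : c ≠ 0) :
    ∫ x in a..b, Real.sin (c * x) = (Real.cos (c * a) - Real.cos (c * b)) / c := by
  rw [integral_eq_sub_of_hasDerivAt (fun x _ => hasDerivAt_cos_c c x hc)
    ((Real.continuous_sin.comp (continuous_const.mul continuous_id)).intervalIntegrable a b)]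
  ring

lemma int_x_cos (c L : ℝ) (hc : c ≠ 0) :
    ∫ x in (0:ℝ)..L, x * Real.cos (c * x)
      = L * Real.sin (c * L) / c + (Real.cos (c * L) - 1) / c ^ 2 := by
  rw [integral_eq_sub_of_hasDerivAt (fun x _ => hasDerivAt_xsin c x hc)
    ((continuous_id.mul (Real.continuous_cos.comp (continuous_const.mul continuous_id))).intervalIntegrable
      0 L)]
  simp [Real.cos_zero, Real.sin_zero]
  ring

lemma int_cos_mul_sin (a b L : ℝ) (h1 : b + a ≠ 0) (h2 : b - a ≠ 0) :
    ∫ x in (0:ℝ)..L, Real.cos (a * x) * Real.sin (b * x)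
      = (1 - Real.cos ((b + a) * L)) / (2 * (b + a)) + (1 - Real.cos ((b - a) * L)) / (2 * (b - a)) := by
  have hd : ∀ x : ℝ, HasDerivAt
      (fun u => -Real.cos ((b + a) * u) / (b + a) / 2 + -Real.cos ((b - a) * u) / (b - a) / 2)
      (Real.cos (a * x) * Real.sin (b * x)) x := by
    intro x
    have h := ((hasDerivAt_cos_c (b + a) x h1).div_const 2).add
      ((hasDerivAt_cos_c (b - a) x h2).div_const 2)
    have he : Real.sin ((b + a) * x) / 2 + Real.sin ((b - a) * x) / 2
        = Real.cos (a * x) * Real.sin (b * x) := by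
      rw [show (b + a) * x = b * x + a * x by ring, show (b - a) * x = b * x - a * x by ring,
        Real.sin_add, Real.sin_sub]
      ring
    rw [he] at h
    exact h
  rw [integral_eq_sub_of_hasDerivAt (fun x _ => hd x)
    (((Real.continuous_cos.comp (continuous_const.mul continuous_id)).mul
      (Real.continuous_sin.comp (continuous_const.mul continuous_id))).intervalIntegrable 0 L)]
  simp only [mul_zero, Real.cos_zero]
  field_simp
  ring

lemma int_cos_mul_sin_self (a L : ℝ) (ha : a ≠ 0) :
    ∫ x in (0:ℝ)..L, Real.cos (a * x) * Real.sin (a * x)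
      = (1 - Real.cos (2 * a * L)) / (4 * a) := by
  have hd : ∀ x : ℝ, HasDerivAt (fun u => -Real.cos (2 * a * u) / (2 * a) / 2)
      (Real.cos (a * x) * Real.sin (a * x)) x := by
    intro x
    have h := (hasDerivAt_cos_c (2 * a) x (by simpa using ha)).div_const 2
    have he : Real.sin (2 * a * x) / 2 = Real.cos (a * x) * Real.sin (a * x) := by
      rw [show 2 * a * x = a * x + a * x by ring, Real.sin_add]; ring
    rw [he] at h
    exact h
  rw [integral_eq_sub_of_hasDerivAt (fun x _ => hd x)
    (((Real.continuous_cos.comp (continuous_const.mul continuous_id)).mul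
      (Real.continuous_sin.comp (continuous_const.mul continuous_id))).intervalIntegrable 0 L)]
  simp only [mul_zero, Real.cos_zero]
  field_simp
  ring


noncomputable def fourierCoefA (β L : ℝ) (m n : ℕ) : ℝ :=
  if m = n then 0
  else if n = 0 then
    -16 * β * L^2 * (1 - Real.cos (m * π)) / ((m:ℝ)^2 * π^2 * ((m:ℝ)^2 * π^2 + 4 * β * L^2))
  else if m = 0 then
    -(-16 * β * L^2 * (1 - Real.cos (n * π)) / ((n:ℝ)^2 * π^2 * ((n:ℝ)^2 * π^2 + 4 * β * L^2)))
  else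
    -32 * β * L^2 * (Real.cos ((m + n : ℕ) * π) - 1)
      / (((n:ℝ)^2 - (m:ℝ)^2) * π^2 * (((m:ℝ)^2 + (n:ℝ)^2) * π^2 + 4 * β * L^2))

noncomputable def neumannCoef (L : ℝ) (g : ℝ → ℝ → ℝ) (m n : ℕ) : ℝ :=
  ((if m = 0 then (1:ℝ) else 2) * (if n = 0 then (1:ℝ) else 2) / L^2)
    * ∫ x in (0:ℝ)..L, ∫ y in (0:ℝ)..L, g x y * Real.cos (m * π * x / L) * Real.cos (n * π * y / L)













theorem fourier_coefficients_absorbing (β L : ℝ) (hβ : 0 < β) (hL : 0 < L) :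
    ∀ m n : ℕ,
      -((((m:ℝ)^2 + (n:ℝ)^2) * π^2 / L^2) + 4 * β) * fourierCoefA β L m n
        = neumannCoef L (fun x y => 4 * β * Real.sign (y - x)) m n := by
  intro m n
  have hπ : π ≠ 0 := Real.pi_ne_zero
  have hL' : L ≠ 0 := hL.ne'
  simp only [neumannCoef]
  have houter : (∫ x in (0:ℝ)..L, ∫ y in (0:ℝ)..L,
      4 * β * Real.sign (y - x) * Real.cos (m*π*x/L) * Real.cos (n*π*y/L))
      = ∫ x in (0:ℝ)..L, 4*β*Real.cos (((m:ℝ)*π/L)*x) *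
        (if n = 0 then L - 2*x else (-2*L/((n:ℝ)*π)) * Real.sin (((n:ℝ)*π/L)*x)) := by
    apply intervalIntegral.integral_congr
    intro x hx
    rw [uIcc_of_le hL.le] at hx
    exact inner_eval β L hL m n x hx.1 hx.2
  rw [houter]
  rcases eq_or_ne m n with hmn | hmn
  · -- m = n
    subst hmn
    rw [fourierCoefA, if_pos rfl, mul_zero]
    rcases eq_or_ne m 0 with hm | hm
    · subst hm
      rw [if_pos rfl]
      have hfun : (fun x : ℝ => 4*β*Real.cos ((((0:ℕ):ℝ)*π/L)*x) *
          (if (0:ℕ) = 0 then L - 2*x else (-2*L/(((0:ℕ):ℝ)*π)) * Real.sin ((((0:ℕ):ℝ)*π/L)*x)))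
          = fun x : ℝ => 4*β*L - 8*β*x := by
        funext x
        rw [if_pos rfl]
        norm_num
        ring
      rw [hfun, intervalIntegral.integral_sub intervalIntegrable_const
        ((by fun_prop : Continuous fun x : ℝ => 8*β*x).intervalIntegrable 0 L)]
      rw [intervalIntegral.integral_const, intervalIntegral.integral_const_mul,
        integral_id]
      simp only [smul_eq_mul, sub_zero]
      ring_nf
    · have ha : (m:ℝ)*π/L ≠ 0 :=
        div_ne_zero (mul_ne_zero (Nat.cast_ne_zero.mpr hm) hπ) hL'
      rw [if_neg hm]
      have hfun : (fun x : ℝ => 4*β*Real.cos (((m:ℝ)*π/L)*x) *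
          (if m = 0 then L - 2*x else (-2*L/((m:ℝ)*π)) * Real.sin (((m:ℝ)*π/L)*x)))
          = fun x : ℝ => (4*β*(-2*L/((m:ℝ)*π))) *
            (Real.cos (((m:ℝ)*π/L)*x) * Real.sin (((m:ℝ)*π/L)*x)) := by
        funext x; rw [if_neg hm]; ring
      rw [hfun, intervalIntegral.integral_const_mul, int_cos_mul_sin_self _ _ ha]
      rw [show 2*((m:ℝ)*π/L)*L = (m:ℝ)*(2*π) by field_simp, Real.cos_nat_mul_two_pi]
      simp
  · -- m ≠ n
    rcases eq_or_ne n 0 with hn | hn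
    · -- n = 0, m ≠ 0
      subst hn
      have hm : m ≠ 0 := hmn
      have hmR : (m:ℝ) ≠ 0 := Nat.cast_ne_zero.mpr hm
      have ha : (m:ℝ)*π/L ≠ 0 := div_ne_zero (mul_ne_zero hmR hπ) hL'
      rw [fourierCoefA, if_neg hmn, if_pos rfl, if_neg hm, if_pos rfl]
      have hfun : (fun x : ℝ => 4*β*Real.cos (((m:ℝ)*π/L)*x) *
          (if (0:ℕ) = 0 then L - 2*x else (-2*L/(((0:ℕ):ℝ)*π)) * Real.sin ((((0:ℕ):ℝ)*π/L)*x)))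
          = fun x : ℝ => (4*β*L) * Real.cos (((m:ℝ)*π/L)*x)
              - (8*β) * (x * Real.cos (((m:ℝ)*π/L)*x)) := by
        funext x; rw [if_pos rfl]; ring
      rw [hfun, intervalIntegral.integral_sub
        ((by fun_prop : Continuous fun x : ℝ => 4*β*L*Real.cos (((m:ℝ)*π/L)*x)).intervalIntegrable 0 L)
        ((by fun_prop : Continuous fun x : ℝ => (8*β)*(x*Real.cos (((m:ℝ)*π/L)*x))).intervalIntegrable 0 L),
        intervalIntegral.integral_const_mul, intervalIntegral.integral_const_mul,
        int_cos_c _ _ _ ha, int_x_cos _ _ ha]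
      rw [show ((m:ℝ)*π/L)*L = (m:ℝ)*π by field_simp]
      rw [Real.sin_nat_mul_pi, mul_zero, Real.sin_zero]
      have hden : (m:ℝ)^2*π^2 + 4*β*L^2 ≠ 0 := by positivity
      field_simp
      ring
    · rcases eq_or_ne m 0 with hm | hm
      · -- m = 0, n ≠ 0
        subst hm
        have hnR : (n:ℝ) ≠ 0 := Nat.cast_ne_zero.mpr hn
        have hb : (n:ℝ)*π/L ≠ 0 := div_ne_zero (mul_ne_zero hnR hπ) hL'
        rw [fourierCoefA, if_neg hmn, if_neg hn, if_pos rfl, if_pos rfl, if_neg hn]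
        have hfun : (fun x : ℝ => 4*β*Real.cos ((((0:ℕ):ℝ)*π/L)*x) *
            (if n = 0 then L - 2*x else (-2*L/((n:ℝ)*π)) * Real.sin (((n:ℝ)*π/L)*x)))
            = fun x : ℝ => (4*β*(-2*L/((n:ℝ)*π))) * Real.sin (((n:ℝ)*π/L)*x) := by
          funext x; rw [if_neg hn]; norm_num; ring
        rw [hfun, intervalIntegral.integral_const_mul, int_sin_c _ _ _ hb]
        rw [show ((n:ℝ)*π/L)*L = (n:ℝ)*π by field_simp]
        rw [mul_zero, Real.cos_zero]
        have hden : (n:ℝ)^2*π^2 + 4*β*L^2 ≠ 0 := by positivity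
        field_simp
        ring
      · -- m ≠ 0, n ≠ 0, m ≠ n
        have hmR : (m:ℝ) ≠ 0 := Nat.cast_ne_zero.mpr hm
        have hnR : (n:ℝ) ≠ 0 := Nat.cast_ne_zero.mpr hn
        have hmnR : (n:ℝ) ≠ (m:ℝ) := fun h => hmn (Nat.cast_injective h).symm
        have hn' : (0:ℝ) < (n:ℝ) := by exact_mod_cast Nat.pos_of_ne_zero hn
        have hm' : (0:ℝ) < (m:ℝ) := by exact_mod_cast Nat.pos_of_ne_zero hm
        have h1 : (n:ℝ) + (m:ℝ) ≠ 0 := by positivity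
        have h2 : (n:ℝ) - (m:ℝ) ≠ 0 := sub_ne_zero.mpr hmnR
        have hsum : (n:ℝ)*π/L + (m:ℝ)*π/L ≠ 0 := by
          rw [show (n:ℝ)*π/L + (m:ℝ)*π/L = ((n:ℝ)+(m:ℝ))*π/L by ring]
          exact div_ne_zero (mul_ne_zero h1 hπ) hL'
        have hdiff : (n:ℝ)*π/L - (m:ℝ)*π/L ≠ 0 := by
          rw [show (n:ℝ)*π/L - (m:ℝ)*π/L = ((n:ℝ)-(m:ℝ))*π/L by ring]
          exact div_ne_zero (mul_ne_zero h2 hπ) hL'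
        rw [fourierCoefA, if_neg hmn, if_neg hn, if_neg hm, if_neg hn, if_neg hm]
        have hfun : (fun x : ℝ => 4*β*Real.cos (((m:ℝ)*π/L)*x) *
            (if n = 0 then L - 2*x else (-2*L/((n:ℝ)*π)) * Real.sin (((n:ℝ)*π/L)*x)))
            = fun x : ℝ => (4*β*(-2*L/((n:ℝ)*π))) *
              (Real.cos (((m:ℝ)*π/L)*x) * Real.sin (((n:ℝ)*π/L)*x)) := by
          funext x; rw [if_neg hn]; ring
        rw [hfun, intervalIntegral.integral_const_mul,
          int_cos_mul_sin _ _ _ hsum hdiff]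
        rw [show ((n:ℝ)*π/L + (m:ℝ)*π/L)*L = ((m:ℝ)+(n:ℝ))*π by field_simp; ring]
        rw [show ((n:ℝ)*π/L - (m:ℝ)*π/L)*L = ((n:ℝ)-(m:ℝ))*π by field_simp]
        have hcos : Real.cos (((n:ℝ)-(m:ℝ))*π) = Real.cos (((m:ℝ)+(n:ℝ))*π) := by
          rw [show ((m:ℝ)+(n:ℝ))*π = ((n:ℝ)-(m:ℝ))*π + (m:ℤ)*(2*π) by push_cast; ring,
            Real.cos_add_int_mul_two_pi]
        rw [hcos]
        push_cast
        have h3 : (n:ℝ)^2 - (m:ℝ)^2 ≠ 0 := by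
          rw [show (n:ℝ)^2 - (m:ℝ)^2 = ((n:ℝ)-(m:ℝ))*((n:ℝ)+(m:ℝ)) by ring]
          exact mul_ne_zero h2 h1
        have hval : (1 - Real.cos (((m:ℝ)+(n:ℝ))*π))/(2*((n:ℝ)*π/L + (m:ℝ)*π/L))
            + (1 - Real.cos (((m:ℝ)+(n:ℝ))*π))/(2*((n:ℝ)*π/L - (m:ℝ)*π/L))
            = L*(1 - Real.cos (((m:ℝ)+(n:ℝ))*π))*(n:ℝ)/((((n:ℝ)^2-(m:ℝ)^2))*π) := by
          rw [show (2*((n:ℝ)*π/L + (m:ℝ)*π/L)) = 2*(((n:ℝ)+(m:ℝ))*π)/L by ring,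
            show (2*((n:ℝ)*π/L - (m:ℝ)*π/L)) = 2*(((n:ℝ)-(m:ℝ))*π)/L by ring]
          rw [div_div_eq_mul_div, div_div_eq_mul_div]
          rw [div_add_div _ _ (by exact mul_ne_zero two_ne_zero (mul_ne_zero h1 hπ))
            (by exact mul_ne_zero two_ne_zero (mul_ne_zero h2 hπ))]
          rw [div_eq_div_iff (by exact mul_ne_zero (mul_ne_zero two_ne_zero (mul_ne_zero h1 hπ)) (mul_ne_zero two_ne_zero (mul_ne_zero h2 hπ))) (mul_ne_zero h3 hπ)]
          ring
        rw [hval]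
        have hden : ((m:ℝ)^2 + (n:ℝ)^2)*π^2 + 4*β*L^2 ≠ 0 := by positivity
        field_simp
        ring
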